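/- The generalized Apostol-Euler polynomials of order 2α at γ = −1/2 satisfy the recurrence Σ_{k=0}^{n} C(n,k) · (Σ_{i=0}^{n−k} ⟨2α⟩_i · (−1)^i · S(n−k,i)) · E_k^{(2α)}(x; −1/2) = 2^{4α} · x^n for all n ≥ 0. -/

import Mathlib

open Finset PowerSeries

/-- Stirling numbers of the second kind. -/
def stirling2 : ℕ → ℕ → ℕ
  | 0, 0 => 1
  | 0, _ + 1 => 0
  | _ + 1, 0 => 0
  | n + 1, k + 1 => (k + 1) * stirling2 n (k + 1) + stirling2 n k

/-- The falling factorial `⟨x⟩_i = x(x-1)⋯(x-i+1)`. -/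
def fall (x : ℚ) (m : ℕ) : ℚ := ∏ j ∈ Finset.range m, (x - j)

lemma stirling2_eq_zero : ∀ m i, m < i → stirling2 m i = 0
  | 0, _ + 1, _ => rfl
  | m + 1, k + 1, h => by
    have h1 : m < k + 1 := by omega
    have h2 : m < k := by omega
    simp [stirling2, stirling2_eq_zero m (k+1) h1, stirling2_eq_zero m k h2]

lemma fall_cast (N : ℕ) : ∀ i, fall (N : ℚ) i = (N.descFactorial i : ℚ)
  | 0 => by simp [fall]
  | i + 1 => by
    rw [fall, Finset.prod_range_succ, ← fall, fall_cast N i]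
    rcases lt_or_ge i N with h | h
    · rw [Nat.descFactorial_succ]
      push_cast [Nat.cast_sub h.le]
      ring
    · rw [Nat.descFactorial_succ, Nat.sub_eq_zero_of_le h]
      rcases eq_or_lt_of_le h with rfl | h'
      · push_cast; ring
      · rw [Nat.descFactorial_eq_zero_iff_lt.2 h']
        push_cast; ring

lemma derivative_exp : d⁄dX ℚ (exp ℚ) = exp ℚ := by
  ext n
  rw [PowerSeries.coeff_derivative, coeff_exp, coeff_exp, Nat.factorial_succ]
  field_simp
  rw [Algebra.algebraMap_self, RingHom.id_apply, RingHom.id_apply]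
  have : (n.factorial : ℚ) ≠ 0 := by positivity
  push_cast
  field_simp

lemma coeff_exp_sub_one_pow : ∀ m i, (m.factorial : ℚ) * coeff (R := ℚ) m ((exp ℚ - 1) ^ i) =
    (stirling2 m i : ℚ) * i.factorial
  | 0, i => by
    rw [coeff_zero_eq_constantCoeff_apply, map_pow, map_sub, constantCoeff_exp, map_one,
      sub_self]
    cases i with
    | zero => simp [stirling2]
    | succ j => simp [stirling2, zero_pow]
  | m + 1, i => by
    cases i with
    | zero => simp [pow_zero, stirling2, coeff_one, stirling2_eq_zero (m+1) 0]
      -- stirling2 (m+1) 0 = 0 by def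
    | succ j =>
      have hD : d⁄dX ℚ ((exp ℚ - 1) ^ (j + 1)) =
          ((j:ℚ⟦X⟧) + 1) * ((exp ℚ - 1) ^ (j + 1) + (exp ℚ - 1) ^ j) := by
        have hd1 : d⁄dX ℚ (exp ℚ - 1) = exp ℚ := by
          rw [map_sub, _root_.derivative_exp, Derivation.map_one_eq_zero, sub_zero]
        rw [Derivation.leibniz_pow, hd1, Nat.add_sub_cancel]
        rw [smul_eq_mul, nsmul_eq_mul]
        push_cast
        ring
      have hc := congrArg (coeff (R := ℚ) m) hD
      rw [PowerSeries.coeff_derivative] at hc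
      have hIH1 := coeff_exp_sub_one_pow m (j + 1)
      have hIH2 := coeff_exp_sub_one_pow m j
      have hm : (m.factorial : ℚ) ≠ 0 := Nat.cast_ne_zero.2 m.factorial_ne_zero
      have hrec : (stirling2 (m+1) (j+1) : ℚ) =
          ((j:ℚ)+1) * stirling2 m (j+1) + stirling2 m j := by
        show ((((j+1) * stirling2 m (j + 1) + stirling2 m j : ℕ)) : ℚ) = _
        push_cast; ring
      have hcm : coeff (R := ℚ) m (((j:ℚ⟦X⟧) + 1) * ((exp ℚ - 1) ^ (j + 1) + (exp ℚ - 1) ^ j)) =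
          ((j:ℚ)+1) * (coeff (R := ℚ) m ((exp ℚ - 1) ^ (j + 1)) + coeff (R := ℚ) m ((exp ℚ - 1) ^ j)) := by
        have : ((j:ℚ⟦X⟧) + 1) = C (R := ℚ) ((j:ℚ)+1) := by push_cast; simp
        rw [this, coeff_C_mul, map_add]
      rw [hcm] at hc
      have e1 : coeff (R := ℚ) m ((exp ℚ - 1) ^ (j+1)) = (stirling2 m (j+1) : ℚ) * (j+1).factorial / m.factorial := by
        field_simp at hIH1 ⊢; linarith [hIH1]
      have e2 : coeff (R := ℚ) m ((exp ℚ - 1) ^ j) = (stirling2 m j : ℚ) * j.factorial / m.factorial := by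
        field_simp at hIH2 ⊢; linarith [hIH2]
      rw [e1, e2] at hc
      have hm1 : ((m+1 : ℕ).factorial : ℚ) = (m+1) * m.factorial := by
        rw [Nat.factorial_succ]; push_cast; ring
      have hj1 : ((j+1 : ℕ).factorial : ℚ) = (j+1) * j.factorial := by
        rw [Nat.factorial_succ]; push_cast; ring
      rw [hm1, hrec, hj1]
      have hmp : ((m:ℚ)+1) ≠ 0 := by positivity
      field_simp at hc ⊢
      nlinarith [hc]

lemma coeff_two_sub_exp_pow (N m : ℕ) :
    (m.factorial : ℚ) * coeff (R := ℚ) m ((2 - exp ℚ) ^ N) =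
      ∑ i ∈ Finset.range (N + 1),
        (-1 : ℚ) ^ i * (N.choose i) * (stirling2 m i : ℚ) * i.factorial := by
  have h2 : (2 : ℚ⟦X⟧) - exp ℚ = (-(exp ℚ - 1)) + 1 := by ring
  rw [h2, add_pow, map_sum, Finset.mul_sum]
  refine Finset.sum_congr rfl fun i hi => ?_
  rw [one_pow, mul_one, neg_pow]
  have hterm : ((-1 : ℚ⟦X⟧) ^ i * (exp ℚ - 1) ^ i * (N.choose i : ℚ⟦X⟧)) =
      C (R := ℚ) ((-1) ^ i * (N.choose i : ℚ)) * (exp ℚ - 1) ^ i := by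
    rw [map_mul, map_pow, map_neg, map_one, map_natCast]
    ring
  rw [hterm, coeff_C_mul]
  have h := coeff_exp_sub_one_pow m i
  linear_combination ((-1 : ℚ) ^ i * (N.choose i : ℚ)) * h

lemma sum_fall_eq (N m : ℕ) :
    ∑ i ∈ Finset.range (m + 1), fall (N : ℚ) i * (-1 : ℚ) ^ i * (stirling2 m i : ℚ) =
      ∑ i ∈ Finset.range (N + 1),
        (-1 : ℚ) ^ i * (N.choose i) * (stirling2 m i : ℚ) * i.factorial := by
  have big : ∀ i : ℕ, fall (N : ℚ) i * (-1 : ℚ) ^ i * (stirling2 m i : ℚ) =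
      (-1 : ℚ) ^ i * (N.choose i) * (stirling2 m i : ℚ) * i.factorial := by
    intro i
    rw [fall_cast, Nat.descFactorial_eq_factorial_mul_choose]
    push_cast
    ring
  have h1 : ∑ i ∈ Finset.range (m + 1), fall (N : ℚ) i * (-1 : ℚ) ^ i * (stirling2 m i : ℚ) =
      ∑ i ∈ Finset.range (N + m + 1), fall (N : ℚ) i * (-1 : ℚ) ^ i * (stirling2 m i : ℚ) := by
    refine Finset.sum_subset (Finset.range_subset_range.2 (by omega)) fun i _ hi => ?_
    have : m < i := by simp only [Finset.mem_range] at hi; omega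
    rw [stirling2_eq_zero m i this]
    simp
  have h2 : ∑ i ∈ Finset.range (N + 1),
        (-1 : ℚ) ^ i * (N.choose i) * (stirling2 m i : ℚ) * i.factorial =
      ∑ i ∈ Finset.range (N + m + 1),
        (-1 : ℚ) ^ i * (N.choose i) * (stirling2 m i : ℚ) * i.factorial := by
    refine Finset.sum_subset (Finset.range_subset_range.2 (by omega)) fun i _ hi => ?_
    have : N < i := by simp only [Finset.mem_range] at hi; omega
    rw [Nat.choose_eq_zero_of_lt this]
    simp
  rw [h1, h2]
  exact Finset.sum_congr rfl fun i _ => big i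

theorem apostolEuler_recurrence (α : ℕ) (E : ℕ → ℚ → ℚ)
    (hE : ∀ x : ℚ,
      (PowerSeries.C (R := ℚ) (-(1 / 2)) * PowerSeries.exp ℚ + 1) ^ (2 * α) *
          PowerSeries.mk (fun n => E n x / n.factorial) =
        (2 : PowerSeries ℚ) ^ (2 * α) * PowerSeries.mk (fun n => x ^ n / n.factorial))
    (n : ℕ) (x : ℚ) :
    ∑ k ∈ Finset.range (n + 1), (n.choose k : ℚ) *
        (∑ i ∈ Finset.range (n - k + 1),
          fall ((2 * α : ℚ)) i * (-1 : ℚ) ^ i * (stirling2 (n - k) i : ℚ)) * E k x =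
      2 ^ (4 * α) * x ^ n := by
  classical
  set G : ℚ⟦X⟧ := (2 - exp ℚ) ^ (2 * α) with hGdef
  have hC2 : ((2 : ℚ⟦X⟧)) = C (R := ℚ) 2 := (map_ofNat (C (R := ℚ)) 2).symm
  have hfactor : (2 : ℚ⟦X⟧) - exp ℚ = 2 * (C (R := ℚ) (-(1 / 2)) * exp ℚ + 1) := by
    rw [hC2, mul_add, mul_one, ← mul_assoc, ← map_mul]
    norm_num
    ring
  have h2G : PowerSeries.mk (fun n => E n x / n.factorial) * G =
      C (R := ℚ) (2 ^ (4 * α)) * PowerSeries.mk (fun n => x ^ n / n.factorial) := by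
    rw [hGdef, hfactor, mul_pow, mul_comm, mul_assoc, hE x, ← mul_assoc, ← pow_add]
    rw [show 2 * α + 2 * α = 4 * α by ring, hC2, ← map_pow]
  have hcoeff : ∑ k ∈ Finset.range (n + 1),
      E k x / (k.factorial : ℚ) * coeff (R := ℚ) (n - k) G = 2 ^ (4 * α) * x ^ n / n.factorial := by
    have h := congrArg (coeff (R := ℚ) n) h2G
    rw [coeff_mul, Finset.Nat.sum_antidiagonal_eq_sum_range_succ_mk, coeff_C_mul] at h
    simpa [coeff_mk, mul_div_assoc] using h
  have hcG : ∀ m : ℕ, ((m.factorial : ℚ)) * coeff (R := ℚ) m G =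
      ∑ i ∈ Finset.range (m + 1), fall ((2 * α : ℚ)) i * (-1 : ℚ) ^ i * (stirling2 m i : ℚ) := by
    intro m
    rw [hGdef, coeff_two_sub_exp_pow (2 * α) m, ← sum_fall_eq (2 * α) m]
    push_cast
    rfl
  have step : ∀ k ∈ Finset.range (n + 1), (n.choose k : ℚ) *
        (∑ i ∈ Finset.range (n - k + 1),
          fall ((2 * α : ℚ)) i * (-1 : ℚ) ^ i * (stirling2 (n - k) i : ℚ)) * E k x =
      (n.factorial : ℚ) * (E k x / (k.factorial : ℚ) * coeff (R := ℚ) (n - k) G) := by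
    intro k hk
    have hkn : k ≤ n := by simp only [Finset.mem_range] at hk; omega
    have hfac : ((n.choose k : ℚ)) * (k.factorial : ℚ) * ((n - k).factorial : ℚ) =
        (n.factorial : ℚ) := by exact_mod_cast Nat.choose_mul_factorial_mul_factorial hkn
    rw [← hcG (n - k), ← hfac]
    have hk0 : (k.factorial : ℚ) ≠ 0 := Nat.cast_ne_zero.2 k.factorial_ne_zero
    field_simp
  rw [Finset.sum_congr rfl step, ← Finset.mul_sum, hcoeff]
  have hn0 : (n.factorial : ℚ) ≠ 0 := Nat.cast_ne_zero.2 n.factorial_ne_zero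
  field_simp
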